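/- In any group G satisfying [G'', G, G] = 1, for all u, v in the derived subgroup G' and all x, y, z in G, we have [u^x, v^y, z] = [u^{x y⁻¹}, v, z]. -/

import Mathlib

open scoped commutatorElement

theorem stmt8 {G : Type*} [Group G]
    (h : ⁅⁅derivedSeries G 2, (⊤ : Subgroup G)⁆, (⊤ : Subgroup G)⁆ = (⊥ : Subgroup G))
    (u v : G) (hu : u ∈ derivedSeries G 1) (hv : v ∈ derivedSeries G 1) (x y z : G) :
    ⁅⁅x⁻¹ * u * x, y⁻¹ * v * y⁆, z⁆ =
      ⁅⁅(x * y⁻¹)⁻¹ * u * (x * y⁻¹), v⁆, z⁆ := by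
  -- elements of ⁅derivedSeries G 2, ⊤⁆ are central
  have hcent : ∀ d : G, d ∈ ⁅derivedSeries G 2, (⊤ : Subgroup G)⁆ → ∀ g : G, Commute d g := by
    intro d hd g
    have : ⁅d, g⁆ ∈ ⁅⁅derivedSeries G 2, (⊤ : Subgroup G)⁆, (⊤ : Subgroup G)⁆ :=
      Subgroup.commutator_mem_commutator hd (Subgroup.mem_top g)
    rw [h, Subgroup.mem_bot] at this
    exact commutatorElement_eq_one_iff_commute.mp this
  set w : G := (x * y⁻¹)⁻¹ * u * (x * y⁻¹) with hw
  have hwmem : w ∈ derivedSeries G 1 := by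
    have hn : (derivedSeries G 1).Normal := derivedSeries_normal G 1
    have h0 := hn.conj_mem u hu (x * y⁻¹)⁻¹
    have : w = (x * y⁻¹)⁻¹ * u * ((x * y⁻¹)⁻¹)⁻¹ := by rw [hw]; group
    rw [this]; exact h0
  have hcmem : ⁅w, v⁆ ∈ derivedSeries G 2 := by
    rw [derivedSeries_succ]
    exact Subgroup.commutator_mem_commutator hwmem hv
  set c : G := ⁅w, v⁆ with hc
  -- LHS inner commutator equals y⁻¹ c y
  have h1 : ⁅x⁻¹ * u * x, y⁻¹ * v * y⁆ = y⁻¹ * c * y := by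
    have hx : x⁻¹ * u * x = y⁻¹ * w * y := by
      rw [hw]; group
    rw [hx, hc, commutatorElement_def, commutatorElement_def]
    group
  -- y⁻¹ c y = c * d with d in [G'', ⊤]
  set d : G := c⁻¹ * (y⁻¹ * c * y) with hd
  have hdmem : d ∈ ⁅derivedSeries G 2, (⊤ : Subgroup G)⁆ := by
    have : d = ⁅c⁻¹, y⁻¹⁆ := by rw [hd, commutatorElement_def]; group
    rw [this]
    exact Subgroup.commutator_mem_commutator (inv_mem hcmem) (Subgroup.mem_top _)
  have hcd : y⁻¹ * c * y = c * d := by rw [hd]; group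
  rw [h1, hcd]
  rw [commutatorElement_def, commutatorElement_def]
  have h2 : d * z = z * d := hcent d hdmem z
  have h3 : d * c⁻¹ = c⁻¹ * d := (hcent d hdmem c⁻¹)
  calc c * d * z * (c * d)⁻¹ * z⁻¹
      = c * (d * z) * d⁻¹ * c⁻¹ * z⁻¹ := by group
    _ = c * (z * d) * d⁻¹ * c⁻¹ * z⁻¹ := by rw [h2]
    _ = c * z * c⁻¹ * z⁻¹ := by group
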